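/- The complete bipartite graph K_{3,3} contains no cracker. -/
import Mathlib


open SimpleGraph

/-- A graph is cubic if every vertex has exactly three neighbours. -/
def IsCubic {V : Type*} (G : SimpleGraph V) : Prop :=
  ∀ v : V, (G.neighborSet v).ncard = 3

/-- A cracker of `G`: a nonempty set of edges of `G`, no two of which share a
vertex, whose deletion disconnects `G`, while no proper subset disconnects `G`. -/
def IsCracker {V : Type*} (G : SimpleGraph V) (C : Set (Sym2 V)) : Prop :=
  C.Nonempty ∧ C ⊆ G.edgeSet ∧
    C.Pairwise (fun e f => ∀ v : V, ¬(v ∈ e ∧ v ∈ f)) ∧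
    ¬(G.deleteEdges C).Connected ∧
    ∀ C' : Set (Sym2 V), C' ⊂ C → (G.deleteEdges C').Connected

/-- A `k`-cracker is a cracker consisting of `k` edges. -/
def IsKCracker {V : Type*} (G : SimpleGraph V) (C : Set (Sym2 V)) (k : ℕ) : Prop :=
  IsCracker G C ∧ C.ncard = k

private lemma fin3_avoid (x y : Fin 3) : ∃ z : Fin 3, z ≠ x ∧ z ≠ y := by revert x y; decide

/-- the complete bipartite graph K_{3,3} contains no cracker. -/
theorem K33_no_cracker :
    ¬ ∃ C : Set (Sym2 (Fin 3 ⊕ Fin 3)),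
      IsCracker (completeBipartiteGraph (Fin 3) (Fin 3)) C := by
  rintro ⟨C, hne, hsub, hpair, hdisc, -⟩
  set G := completeBipartiteGraph (Fin 3) (Fin 3)
  set H := G.deleteEdges C with hH
  -- at most one edge of C contains any vertex
  have huniq : ∀ e ∈ C, ∀ f ∈ C, ∀ v : Fin 3 ⊕ Fin 3, v ∈ e → v ∈ f → e = f := by
    intro e he f hf v hv hv'
    by_contra h
    exact hpair he hf h v ⟨hv, hv'⟩
  have hadj : ∀ (a b : Fin 3), s(Sum.inl a, Sum.inr b) ∉ C →
      H.Adj (Sum.inl a) (Sum.inr b) := by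
    intro a b hnot
    rw [hH, SimpleGraph.deleteEdges_adj]
    exact ⟨by simp [G, completeBipartiteGraph], hnot⟩
  have cross : ∀ (a b : Fin 3), H.Reachable (Sum.inl a) (Sum.inr b) := by
    intro a b
    by_cases hab : s(Sum.inl a, Sum.inr b) ∈ C
    · -- find b' ≠ b
      obtain ⟨b', hb'⟩ := fin3_avoid b b
      have h1 : s(Sum.inl a, Sum.inr b') ∉ C := by
        intro hmem
        have := huniq _ hmem _ hab (Sum.inl a) (by simp) (by simp)
        simp [Sym2.eq_iff] at this
        exact hb'.1 this
      -- find a' avoiding a and (the possible partner of inr b')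
      have ⟨a', ha'⟩ : ∃ a' : Fin 3, a' ≠ a ∧ s(Sum.inl a', Sum.inr b') ∉ C := by
        by_cases hex : ∃ a0 : Fin 3, s(Sum.inl a0, Sum.inr b') ∈ C
        · obtain ⟨a0, ha0⟩ := hex
          obtain ⟨a', h1', h2'⟩ := fin3_avoid a a0
          refine ⟨a', h1', fun hmem => ?_⟩
          have := huniq _ hmem _ ha0 (Sum.inr b') (by simp) (by simp)
          simp [Sym2.eq_iff] at this
          exact h2' this
        · push_neg at hex
          obtain ⟨a', h1', -⟩ := fin3_avoid a a
          exact ⟨a', h1', hex a'⟩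
      have h3 : s(Sum.inl a', Sum.inr b) ∉ C := by
        intro hmem
        have := huniq _ hmem _ hab (Sum.inr b) (by simp) (by simp)
        simp [Sym2.eq_iff] at this
        exact ha'.1 this
      exact ((hadj a b' h1).reachable.trans (hadj a' b' ha'.2).reachable.symm).trans
        (hadj a' b h3).reachable
    · exact (hadj a b hab).reachable
  have hpre : H.Preconnected := by
    intro u v
    rcases u with a | b <;> rcases v with a' | b'
    · exact (cross a 0).trans (cross a' 0).symm
    · exact cross a b'
    · exact (cross a' b).symm
    · exact ((cross 0 b).symm).trans (cross 0 b')
  exact hdisc ⟨hpre⟩
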